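/- Fix n ∈ ℕ. For i ∈ {0, 1, …, n}, define f(i) = −((i+1)/(n+1))·log((i+1)/(n+1)) − ((n−i)/(n+1))·log((n−i)/(n+1)), with the convention 0·log 0 = 0. Then for every i ∈ {0, 1, …, n}, f(i) ≤ f(⌊n/2⌋); that is, the entropy of the threshold question is maximized at the middle index. -/

import Mathlib

/-- Example 2: the entropy of the two-point answer distribution of the threshold
question `q i` ("is the position ≤ i?") under the uniform prior on `{0, …, n}`:
`f i = −((i+1)/(n+1))·log((i+1)/(n+1)) − ((n−i)/(n+1))·log((n−i)/(n+1))`. -/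
noncomputable def thresholdEntropy (n i : ℕ) : ℝ :=
  Real.negMulLog (((i : ℝ) + 1) / ((n : ℝ) + 1)) +
    Real.negMulLog (((n : ℝ) - (i : ℝ)) / ((n : ℝ) + 1))

/-- The entropy of the threshold question is maximized at the middle index `⌊n/2⌋`,
recovering the binary-search pivot. -/
theorem thresholdEntropy_le_middle (n : ℕ) :
    ∀ i : ℕ, i ≤ n → thresholdEntropy n i ≤ thresholdEntropy n (n / 2) := by
  intro i hi
  have hN : (0:ℝ) < (n:ℝ) + 1 := by positivity
  have key : ∀ j : ℕ, thresholdEntropy n j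
      = Real.binEntropy (((j:ℝ)+1)/((n:ℝ)+1)) := by
    intro j
    rw [Real.binEntropy_eq_negMulLog_add_negMulLog_one_sub, thresholdEntropy]
    congr 1
    congr 1
    field_simp
    ring
  rw [key i, key (n/2)]
  have hm : (n/2 : ℕ) ≤ n := Nat.div_le_self n 2
  have half : ∀ a : ℕ, 2*a ≤ n+1 → (a:ℝ)/((n:ℝ)+1) ≤ 2⁻¹ := by
    intro a ha
    have h2 : ((2*a : ℕ) : ℝ) ≤ (n:ℝ)+1 := by exact_mod_cast ha
    rw [div_le_iff₀ hN]
    push_cast at h2 ⊢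
    linarith
  have hmono : ∀ a b : ℕ, a ≤ b → 2*b ≤ n+1 →
      Real.binEntropy ((a:ℝ)/((n:ℝ)+1)) ≤ Real.binEntropy ((b:ℝ)/((n:ℝ)+1)) := by
    intro a b hab hb
    apply Real.binEntropy_strictMonoOn.monotoneOn
    · exact ⟨by positivity, half a (by omega)⟩
    · exact ⟨by positivity, half b hb⟩
    · gcongr
  -- rewrite RHS as binEntropy ((n - n/2)/(n+1)) using symmetry
  have hrhs : Real.binEntropy ((((n/2:ℕ):ℝ)+1)/((n:ℝ)+1))
      = Real.binEntropy (((n - n/2 : ℕ):ℝ)/((n:ℝ)+1)) := by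
    rw [← Real.binEntropy_one_sub ((((n/2:ℕ):ℝ)+1)/((n:ℝ)+1))]
    congr 1
    rw [Nat.cast_sub hm]
    field_simp
    ring
  rw [hrhs]
  rcases le_or_gt (2*(i+1)) (n+1) with h | h
  · have := hmono (i+1) (n - n/2) (by omega) (by omega)
    push_cast at this
    convert this using 3 <;> push_cast <;> ring
  · have hsym : Real.binEntropy (((i:ℝ)+1)/((n:ℝ)+1))
        = Real.binEntropy (((n - i : ℕ):ℝ)/((n:ℝ)+1)) := by
      rw [← Real.binEntropy_one_sub (((i:ℝ)+1)/((n:ℝ)+1))]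
      congr 1
      rw [Nat.cast_sub hi]
      field_simp
      ring
    rw [hsym]
    exact hmono (n - i) (n - n/2) (by omega) (by omega)
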